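/- Under the imputation formulas, the determinant of the completed matrix Q satisfies det Q = det Q_vv · det(M_hh − M_hv M_vv⁻¹ M_vh), i.e. det Q = det Q_vv · det M / det M_vv. -/

import Mathlib

open Matrix

lemma posdef_block_topleft {n m : ℕ} {A : Matrix (Fin n) (Fin n) ℝ}
    {B : Matrix (Fin n) (Fin m) ℝ} {C : Matrix (Fin m) (Fin n) ℝ}
    {D : Matrix (Fin m) (Fin m) ℝ}
    (h : (Matrix.fromBlocks A B C D).PosDef) : A.PosDef := by
  refine Matrix.PosDef.of_dotProduct_mulVec_pos ?_ ?_
  · have h1 := h.1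
    ext i j
    have := congrFun (congrFun h1 (Sum.inl i)) (Sum.inl j)
    simpa [Matrix.conjTranspose_apply] using this
  · intro x hx
    have := h.dotProduct_mulVec_pos (x := Sum.elim x 0) (by
      intro hcon
      apply hx
      funext i
      have := congrFun hcon (Sum.inl i)
      simpa using this)
    simpa [Matrix.fromBlocks_mulVec, dotProduct] using this

theorem imputed_completion_det {n m : ℕ}
    (Mvv : Matrix (Fin n) (Fin n) ℝ) (Mvh : Matrix (Fin n) (Fin m) ℝ)
    (Mhh : Matrix (Fin m) (Fin m) ℝ)
    (hM : (Matrix.fromBlocks Mvv Mvh Mvhᵀ Mhh).PosDef)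
    (Qvv : Matrix (Fin n) (Fin n) ℝ) (hQvv : Qvv.PosDef)
    (Q : Matrix (Fin n ⊕ Fin m) (Fin n ⊕ Fin m) ℝ)
    (hQ : Q = Matrix.fromBlocks Qvv (Qvv * Mvv⁻¹ * Mvh) (Qvv * Mvv⁻¹ * Mvh)ᵀ
      (Mhh - Mvhᵀ * Mvv⁻¹ * Mvh + Mvhᵀ * Mvv⁻¹ * Qvv * Mvv⁻¹ * Mvh)) :
    Q.det = Qvv.det * (Mhh - Mvhᵀ * Mvv⁻¹ * Mvh).det ∧
      Q.det = Qvv.det * (Matrix.fromBlocks Mvv Mvh Mvhᵀ Mhh).det / Mvv.det := by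
  have hMvv : Mvv.PosDef := posdef_block_topleft hM
  haveI : Invertible Mvv := hMvv.isUnit.invertible
  haveI : Invertible Qvv := hQvv.isUnit.invertible
  have hMvvT : Mvv⁻¹ᵀ = Mvv⁻¹ := by
    rw [Matrix.transpose_nonsing_inv]
    congr 1
    exact hMvv.1
  have hQvvT : Qvvᵀ = Qvv := hQvv.1
  -- key simplification
  have key : (Qvv * Mvv⁻¹ * Mvh)ᵀ * ⅟Qvv * (Qvv * Mvv⁻¹ * Mvh)
      = Mvhᵀ * Mvv⁻¹ * Qvv * Mvv⁻¹ * Mvh := by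
    rw [invOf_eq_nonsing_inv]
    calc (Qvv * Mvv⁻¹ * Mvh)ᵀ * Qvv⁻¹ * (Qvv * Mvv⁻¹ * Mvh)
        = Mvhᵀ * Mvv⁻¹ᵀ * Qvvᵀ * Qvv⁻¹ * Qvv * Mvv⁻¹ * Mvh := by
          simp [Matrix.transpose_mul, Matrix.mul_assoc]
      _ = Mvhᵀ * Mvv⁻¹ * Qvv * Mvv⁻¹ * Mvh := by
          rw [hMvvT, hQvvT, Matrix.mul_assoc (Mvhᵀ * Mvv⁻¹ * Qvv),
            Matrix.inv_mul_of_invertible, Matrix.mul_one]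
  have hdet1 : Q.det = Qvv.det * (Mhh - Mvhᵀ * Mvv⁻¹ * Mvh).det := by
    rw [hQ, Matrix.det_fromBlocks₁₁, key]
    congr 2
    abel
  have hdetM : (Matrix.fromBlocks Mvv Mvh Mvhᵀ Mhh).det
      = Mvv.det * (Mhh - Mvhᵀ * Mvv⁻¹ * Mvh).det := by
    rw [Matrix.det_fromBlocks₁₁, invOf_eq_nonsing_inv]
  refine ⟨hdet1, ?_⟩
  rw [hdet1, hdetM]
  field_simp [hMvv.det_pos.ne']
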